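/- Let Y₁(x,v,a) = (0,0,2v), Y₂(x,v,a) = (0,v,2a), Y₃(x,v,a) = (v,a,3a²/(2v)) on ℝ³, and let Y_α^[2](p₁,p₂) := (Y_α(p₁), Y_α(p₂)) denote their diagonal prolongations to ℝ⁶, with coordinates (x₁,v₁,a₁,x₂,v₂,a₂). The function F₄(x₁,v₁,a₁,x₂,v₂,a₂) = x₁ − x₂ − 2v₁v₂(v₁ + v₂)/(a₁v₂ − v₁a₂) satisfies (fderiv ℝ F₄ p)(Y_α^[2](p)) = 0 for α = 1,2,3 at every point p with v₁ ≠ 0, v₂ ≠ 0 and a₁v₂ − v₁a₂ ≠ 0. Hence F₄ is a t-independent constant of motion of the diagonal prolongation of the Schwarzian system X_t = Y₃ + b₁(t)Y₁. -/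

import Mathlib

/-- Diagonal prolongations to `ℝ⁶` of the Vessiot--Guldberg vector fields of
the Schwarzian equation; coordinates
`(x₁,v₁,a₁,x₂,v₂,a₂) = (p 0, p 1, p 2, p 3, p 4, p 5)`. -/
noncomputable def schwarzY₁p : (Fin 6 → ℝ) → (Fin 6 → ℝ) :=
  fun p => ![0, 0, 2 * p 1, 0, 0, 2 * p 4]

noncomputable def schwarzY₂p : (Fin 6 → ℝ) → (Fin 6 → ℝ) :=
  fun p => ![0, p 1, 2 * p 2, 0, p 4, 2 * p 5]

noncomputable def schwarzY₃p : (Fin 6 → ℝ) → (Fin 6 → ℝ) :=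
  fun p => ![p 1, p 2, 3 * (p 2) ^ 2 / (2 * p 1),
             p 4, p 5, 3 * (p 5) ^ 2 / (2 * p 4)]

/-- `F₄ = x₁ − x₂ − 2v₁v₂(v₁ + v₂)/(a₁v₂ − v₁a₂)`. -/
noncomputable def schwarzF₄ : (Fin 6 → ℝ) → ℝ :=
  fun p => p 0 - p 3 - 2 * p 1 * p 4 * (p 1 + p 4) / (p 2 * p 4 - p 1 * p 5)

private lemma vec6_0 (a b c d e f : ℝ) : (![a,b,c,d,e,f]) 0 = a := rfl
private lemma vec6_1 (a b c d e f : ℝ) : (![a,b,c,d,e,f]) 1 = b := rfl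
private lemma vec6_2 (a b c d e f : ℝ) : (![a,b,c,d,e,f]) 2 = c := rfl
private lemma vec6_3 (a b c d e f : ℝ) : (![a,b,c,d,e,f]) 3 = d := rfl
private lemma vec6_4 (a b c d e f : ℝ) : (![a,b,c,d,e,f]) 4 = e := rfl
private lemma vec6_5 (a b c d e f : ℝ) : (![a,b,c,d,e,f]) 5 = f := rfl

/-- `F₄` is annihilated by the diagonal prolongations of
`Y₁, Y₂, Y₃` wherever `v₁ ≠ 0`, `v₂ ≠ 0` and `a₁v₂ − v₁a₂ ≠ 0`; hence it is
a t-independent constant of motion of the prolonged Schwarzian system. -/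
theorem schwarzian_constant_of_motion_F4 :
    ∀ p : Fin 6 → ℝ, p 1 ≠ 0 → p 4 ≠ 0 → p 2 * p 4 - p 1 * p 5 ≠ 0 →
      fderiv ℝ schwarzF₄ p (schwarzY₁p p) = 0 ∧
      fderiv ℝ schwarzF₄ p (schwarzY₂p p) = 0 ∧
      fderiv ℝ schwarzF₄ p (schwarzY₃p p) = 0 := by
  intro p h1 h4 hd
  have hx := fun i : Fin 6 => hasFDerivAt_apply (𝕜 := ℝ) i p
  have hnum : HasFDerivAt (fun q : Fin 6 → ℝ => 2 * q 1 * q 4 * (q 1 + q 4)) _ p :=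
    (((hx 1).const_mul 2).mul (hx 4)).mul ((hx 1).add (hx 4))
  have hden : HasFDerivAt (fun q : Fin 6 → ℝ => q 2 * q 4 - q 1 * q 5) _ p :=
    ((hx 2).mul (hx 4)).sub ((hx 1).mul (hx 5))
  have hinv : HasFDerivAt (fun q : Fin 6 → ℝ => (q 2 * q 4 - q 1 * q 5)⁻¹) _ p :=
    (hasFDerivAt_inv hd).comp p hden
  have hF : HasFDerivAt (fun q : Fin 6 → ℝ =>
      q 0 - q 3 - 2 * q 1 * q 4 * (q 1 + q 4) * (q 2 * q 4 - q 1 * q 5)⁻¹) _ p :=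
    ((hx 0).sub (hx 3)).sub (hnum.mul hinv)
  have hFeq : schwarzF₄ = fun q : Fin 6 → ℝ =>
      q 0 - q 3 - 2 * q 1 * q 4 * (q 1 + q 4) * (q 2 * q 4 - q 1 * q 5)⁻¹ := by
    funext q; simp [schwarzF₄, div_eq_mul_inv]
  rw [hFeq, hF.fderiv]
  have hd' : p 4 * p 2 - p 1 * p 5 ≠ 0 := by
    convert hd using 1; ring
  refine ⟨?_, ?_, ?_⟩ <;>
  · simp only [schwarzY₁p, schwarzY₂p, schwarzY₃p, ContinuousLinearMap.sub_apply,
      ContinuousLinearMap.add_apply, ContinuousLinearMap.smul_apply,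
      ContinuousLinearMap.comp_apply, ContinuousLinearMap.smulRight_apply,
      ContinuousLinearMap.one_apply, ContinuousLinearMap.proj_apply,
      vec6_0, vec6_1, vec6_2, vec6_3, vec6_4, vec6_5, smul_eq_mul,
      ContinuousLinearMap.toSpanSingleton_apply, Pi.mul_apply]
    field_simp
    ring
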